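/- Every directed multigraph G can be edge-decomposed into k spanning subgraphs G_1, …, G_k such that for each vertex v and each i, |d⁺_{G_i}(v) − d⁺_G(v)/k| < 1 and |d⁻_{G_i}(v) − d⁻_G(v)/k| < 1, and moreover for every vertex u with d⁺_G(u) ≡ d⁻_G(u) (mod k), each d_{G_i}(u) has the same parity as (d⁺_G(u) − d⁻_G(u))/k. -/

import Mathlib

set_option maxHeartbeats 1600000


open Finset

variable {V E : Type*}

/-- Out-degree of `v` in the sub-digraph given by arc set `S`; `ends e = (tail, head)`. -/
def outdeg [DecidableEq V] (ends : E → V × V) (S : Finset E) (v : V) : ℕ :=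
  (S.filter fun e => (ends e).1 = v).card

/-- In-degree of `v` in the sub-digraph given by arc set `S`. -/
def indeg [DecidableEq V] (ends : E → V × V) (S : Finset E) (v : V) : ℕ :=
  (S.filter fun e => (ends e).2 = v).card



lemma card_filter_subtype {A : Type*} (S : Finset A) (p : A → Prop)
    [DecidablePred p] :
    #(univ.filter fun a : {x // x ∈ S} => p a.1) = #(S.filter p) := by
  classical
  apply Finset.card_bij (fun a _ => a.1)
  · intro a ha; simp at ha ⊢; exact ha
  · intro a _ b _ h; exact Subtype.ext h
  · intro b hb; simp at hb; exact ⟨⟨b, hb.1⟩, by simp [hb.2], rfl⟩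

lemma card_filter_sum {γ δ : Type*} [Fintype γ] [Fintype δ] (p : γ ⊕ δ → Prop)
    [DecidablePred p] :
    #(univ.filter p) = #(univ.filter fun x => p (Sum.inl x)) +
      #(univ.filter fun x => p (Sum.inr x)) := by
  classical
  have : univ.filter p =
      ((univ.filter fun x => p (Sum.inl x)).map ⟨Sum.inl, Sum.inl_injective⟩) ∪
      ((univ.filter fun x => p (Sum.inr x)).map ⟨Sum.inr, Sum.inr_injective⟩) := by
    ext x; cases x <;> simp
  rw [this, Finset.card_union_of_disjoint (by simp [Finset.disjoint_left]),
    Finset.card_map, Finset.card_map]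

lemma card_filter_sigma {U : Type*} [Fintype U] [DecidableEq U] (n : U → ℕ)
    (p : (Σ u : U, Fin (n u)) → Prop) [DecidablePred p] :
    #(univ.filter p) = ∑ u : U, #(univ.filter fun j : Fin (n u) => p ⟨u, j⟩) := by
  classical
  rw [Finset.card_eq_sum_card_fiberwise (f := Sigma.fst) (t := univ) (fun x _ => mem_univ _)]
  refine Finset.sum_congr rfl fun u _ => ?_
  symm
  apply Finset.card_bij (fun j _ => (⟨u, j⟩ : Σ u : U, Fin (n u)))
  · intro j hj; simp at hj ⊢; exact hj
  · intro a _ b _ h; simpa using h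
  · rintro ⟨u', j⟩ hb
    simp at hb
    obtain rfl := hb.2
    exact ⟨j, by simp [hb.1], rfl⟩


lemma hall_factor {A X Y : Type*} [Fintype A] [DecidableEq A]
    [Fintype X] [DecidableEq X] [Fintype Y] [DecidableEq Y]
    (l : A → X) (r : A → Y) (k : ℕ) (hk : 0 < k)
    (hx : ∀ x, k ∣ #(univ.filter fun a => l a = x))
    (hy : ∀ y, k ∣ #(univ.filter fun a => r a = y)) :
    ∃ F : Finset A,
      (∀ x, #(F.filter fun a => l a = x) = #(univ.filter fun a => l a = x) / k) ∧
      (∀ y, #(F.filter fun a => r a = y) = #(univ.filter fun a => r a = y) / k) := by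
  classical
  obtain ⟨m, rfl⟩ : ∃ m, k = m + 1 := ⟨k - 1, (Nat.succ_pred_eq_of_pos hk).symm⟩
  set k := m + 1 with hkdef
  set dx : X → ℕ := fun x => #(univ.filter fun a => l a = x) with hdx
  set dy : Y → ℕ := fun y => #(univ.filter fun a => r a = y) with hdy
  set ρ : X → ℕ := fun x => dx x / k with hρ
  set γ : Y → ℕ := fun y => dy y / k with hγ
  have hkρ : ∀ x, k * ρ x = dx x := fun x => Nat.mul_div_cancel' (hx x)
  have hkγ : ∀ y, k * γ y = dy y := fun y => Nat.mul_div_cancel' (hy y)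
  set t : (Σ x : X, Fin (ρ x)) ⊕ A → Finset (A ⊕ (Σ y : Y, Fin (γ y))) :=
    Sum.elim
      (fun p => (univ.filter fun e => l e = p.1).image Sum.inl)
      (fun e => insert (Sum.inl e)
        ((univ.filter fun p : Σ y : Y, Fin (γ y) => p.1 = r e).image Sum.inr))
    with ht
  have hall : ∀ S : Finset ((Σ x : X, Fin (ρ x)) ⊕ A), #S ≤ #(S.biUnion t) := by
    intro S
    set XS := univ.filter (fun x : X => ∃ i : Fin (ρ x), Sum.inl ⟨x, i⟩ ∈ S) with hXS
    set K := univ.filter (fun e : A => Sum.inr e ∈ S) with hK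
    set YK := K.image r with hYK
    set P := univ.filter fun e => l e ∈ XS with hP
    set P' := univ.filter fun e => r e ∈ YK with hP'
    have hS : #S ≤ ∑ x ∈ XS, ρ x + #K := by
      have hsub : S ⊆ ((XS.sigma fun x => (univ : Finset (Fin (ρ x)))).image Sum.inl)
          ∪ (K.image Sum.inr) := by
        intro a ha
        rcases a with p | e
        · obtain ⟨x, i⟩ := p
          apply mem_union_left
          exact mem_image_of_mem _ (by simp [mem_sigma, hXS]; exact ⟨i, ha⟩)
        · exact mem_union_right _ (mem_image_of_mem _ (by simp [hK, ha]))
      calc #S ≤ _ := card_le_card hsub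
        _ ≤ #((XS.sigma fun x => (univ : Finset (Fin (ρ x)))).image Sum.inl)
            + #(K.image Sum.inr) := card_union_le _ _
        _ ≤ ∑ x ∈ XS, ρ x + #K := by
            rw [Finset.card_image_of_injective _ Sum.inl_injective,
              Finset.card_image_of_injective _ Sum.inr_injective, Finset.card_sigma]
            simp
    have h1 : (P ∪ K).image Sum.inl ⊆ S.biUnion t := by
      intro b hb
      obtain ⟨e, he, rfl⟩ := Finset.mem_image.1 hb
      rcases Finset.mem_union.1 he with he | he
      · have hle : l e ∈ XS := (Finset.mem_filter.1 he).2
        obtain ⟨i, hi⟩ := (Finset.mem_filter.1 hle).2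
        exact Finset.mem_biUnion.2 ⟨Sum.inl ⟨l e, i⟩, hi, by simp [ht]⟩
      · exact Finset.mem_biUnion.2 ⟨Sum.inr e, (Finset.mem_filter.1 he).2, by simp [ht]⟩
    have h2 : ((YK.sigma fun _ => (univ : Finset (Fin (γ _))))).image Sum.inr ⊆ S.biUnion t := by
      intro b hb
      obtain ⟨⟨y, j⟩, hyj, rfl⟩ := Finset.mem_image.1 hb
      have hy' : y ∈ YK := (Finset.mem_sigma.1 hyj).1
      obtain ⟨e, heK, rfl⟩ := Finset.mem_image.1 hy'
      refine Finset.mem_biUnion.2 ⟨Sum.inr e, (Finset.mem_filter.1 heK).2, ?_⟩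
      simp [ht]
    have hNcard : #(P ∪ K) + ∑ y ∈ YK, γ y ≤ #(S.biUnion t) := by
      have := card_le_card (Finset.union_subset h1 h2)
      rw [Finset.card_union_of_disjoint (by simp [Finset.disjoint_left]),
        Finset.card_image_of_injective _ Sum.inl_injective,
        Finset.card_image_of_injective _ Sum.inr_injective, Finset.card_sigma] at this
      simpa using this
    -- arithmetic middle step
    have hPsum : #P = ∑ x ∈ XS, dx x := by
      rw [Finset.card_eq_sum_card_fiberwise (f := l) (s := P) (t := XS)
        (fun e he => (Finset.mem_filter.1 he).2)]
      refine Finset.sum_congr rfl fun x hxS => ?_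
      rw [hdx]
      congr 1
      ext e
      simp only [hP, Finset.mem_filter, Finset.mem_univ, true_and]
      constructor
      · rintro ⟨_, h⟩; exact h
      · rintro h; exact ⟨h ▸ hxS, h⟩
    have hP'sum : #P' = ∑ y ∈ YK, dy y := by
      rw [Finset.card_eq_sum_card_fiberwise (f := r) (s := P') (t := YK)
        (fun e he => (Finset.mem_filter.1 he).2)]
      refine Finset.sum_congr rfl fun y hyS => ?_
      rw [hdy]
      congr 1
      ext e
      simp only [hP', Finset.mem_filter, Finset.mem_univ, true_and]
      constructor
      · rintro ⟨_, h⟩; exact h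
      · rintro h; exact ⟨h ▸ hyS, h⟩
    have hKP' : K ⊆ P' := by
      intro e he
      simp only [hP', Finset.mem_filter, Finset.mem_univ, true_and, hYK]
      exact mem_image_of_mem _ he
    have hmid : ∑ x ∈ XS, ρ x + #K ≤ #(P ∪ K) + ∑ y ∈ YK, γ y := by
      apply Nat.le_of_mul_le_mul_left _ (show 0 < k from hk)
      have e1 : k * ∑ x ∈ XS, ρ x = #P := by
        rw [Finset.mul_sum, hPsum]; exact Finset.sum_congr rfl fun x _ => hkρ x
      have e2 : k * ∑ y ∈ YK, γ y = #P' := by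
        rw [Finset.mul_sum, hP'sum]; exact Finset.sum_congr rfl fun y _ => hkγ y
      have e3 : #(P ∪ K) = #P + #(K \ P) := by
        rw [← Finset.union_sdiff_self_eq_union,
          Finset.card_union_of_disjoint Finset.sdiff_disjoint.symm]
      have e4 : #(K ∩ P) + #(K \ P) = #K := Finset.card_inter_add_card_sdiff _ _
      have e5 : #(K ∩ P) ≤ #P := card_le_card Finset.inter_subset_right
      have e6 : #K ≤ #P' := card_le_card hKP'
      have e7 : m * #(K ∩ P) ≤ m * #P := Nat.mul_le_mul_left m e5
      rw [Nat.mul_add, Nat.mul_add, e1, e2, e3, hkdef]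
      nlinarith [e4, e6, e7]
    calc #S ≤ ∑ x ∈ XS, ρ x + #K := hS
      _ ≤ #(P ∪ K) + ∑ y ∈ YK, γ y := hmid
      _ ≤ #(S.biUnion t) := hNcard
  obtain ⟨f, hfinj, hf⟩ := (Finset.all_card_le_biUnion_card_iff_exists_injective t).1 hall
  have hsum_dx : ∑ x : X, dx x = Fintype.card A := by
    rw [← Finset.card_univ,
      Finset.card_eq_sum_card_fiberwise (f := l) (t := univ) (fun e _ => mem_univ _)]
  have hsum_dy : ∑ y : Y, dy y = Fintype.card A := by
    rw [← Finset.card_univ,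
      Finset.card_eq_sum_card_fiberwise (f := r) (t := univ) (fun e _ => mem_univ _)]
  have hcard : Fintype.card ((Σ x : X, Fin (ρ x)) ⊕ A)
      = Fintype.card (A ⊕ (Σ y : Y, Fin (γ y))) := by
    have hsρ : k * ∑ x : X, ρ x = k * ∑ y : Y, γ y := by
      rw [Finset.mul_sum, Finset.mul_sum]
      calc ∑ x : X, k * ρ x = ∑ x : X, dx x := Finset.sum_congr rfl fun x _ => hkρ x
        _ = ∑ y : Y, dy y := by rw [hsum_dx, hsum_dy]
        _ = ∑ y : Y, k * γ y := (Finset.sum_congr rfl fun y _ => hkγ y).symm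
    have : ∑ x : X, ρ x = ∑ y : Y, γ y := Nat.eq_of_mul_eq_mul_left hk hsρ
    rw [Fintype.card_sum, Fintype.card_sum, Fintype.card_sigma, Fintype.card_sigma]
    simp only [Fintype.card_fin]
    rw [this, Nat.add_comm]
  have fbij : Function.Bijective f := (Fintype.bijective_iff_injective_and_card f).2 ⟨hfinj, hcard⟩
  set F : Finset A := univ.filter fun e => ∃ p : Σ x : X, Fin (ρ x), f (Sum.inl p) = Sum.inl e
    with hF
  refine ⟨F, fun x => ?_, fun y => ?_⟩
  · -- row counts
    have hgex : ∀ i : Fin (ρ x), ∃ e : A, f (Sum.inl ⟨x, i⟩) = Sum.inl e ∧ l e = x := by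
      intro i
      have := hf (Sum.inl ⟨x, i⟩)
      simp only [ht, Sum.elim_inl, Finset.mem_image, Finset.mem_filter, Finset.mem_univ,
        true_and] at this
      obtain ⟨e, hle, heq⟩ := this
      exact ⟨e, heq.symm, hle⟩
    choose g hg hgl using hgex
    have himg : F.filter (fun a => l a = x) = univ.image g := by
      ext e
      simp only [Finset.mem_filter, Finset.mem_image, Finset.mem_univ, true_and, hF]
      constructor
      · rintro ⟨⟨⟨x', i'⟩, hp⟩, hlx⟩
        have := hf (Sum.inl ⟨x', i'⟩)
        simp only [ht, Sum.elim_inl, Finset.mem_image, Finset.mem_filter, Finset.mem_univ,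
          true_and] at this
        obtain ⟨e', hle', heq⟩ := this
        rw [hp] at heq
        obtain rfl : e' = e := Sum.inl_injective heq
        obtain rfl : x' = x := by rw [← hle', hlx]
        exact ⟨i', Sum.inl_injective ((hg i').symm.trans hp)⟩
      · rintro ⟨i, rfl⟩
        exact ⟨⟨⟨x, i⟩, hg i⟩, hgl i⟩
    have hginj : Function.Injective g := by
      intro i j hij
      have : f (Sum.inl ⟨x, i⟩) = f (Sum.inl ⟨x, j⟩) := by rw [hg i, hg j, hij]
      have := hfinj this
      simpa using this
    rw [himg, Finset.card_image_of_injective _ hginj]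
    simp [hρ]
    rfl
  · -- column counts
    have hhex : ∀ j : Fin (γ y), ∃ e : A, f (Sum.inr e) = Sum.inr ⟨y, j⟩ ∧ r e = y := by
      intro j
      obtain ⟨a, ha⟩ := fbij.2 (Sum.inr ⟨y, j⟩)
      rcases a with p | e
      · exfalso
        have := hf (Sum.inl p)
        simp only [ht, Sum.elim_inl, Finset.mem_image, Finset.mem_filter, Finset.mem_univ,
          true_and] at this
        obtain ⟨e', _, heq⟩ := this
        rw [ha] at heq
        exact Sum.inl_ne_inr heq
      · have := hf (Sum.inr e)
        simp only [ht, Sum.elim_inr, Finset.mem_insert, Finset.mem_image, Finset.mem_filter,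
          Finset.mem_univ, true_and] at this
        rcases this with h | ⟨p, hp1, hp2⟩
        · rw [ha] at h; exact absurd h (by simp)
        · rw [ha] at hp2
          obtain rfl : p = ⟨y, j⟩ := Sum.inr_injective hp2
          exact ⟨e, ha, hp1.symm⟩
    choose h hh hhr using hhex
    have himg : F.filter (fun a => r a = y) = univ.image h := by
      ext e
      simp only [Finset.mem_filter, Finset.mem_image, Finset.mem_univ, true_and, hF]
      constructor
      · rintro ⟨⟨p, hp⟩, hry⟩
        have := hf (Sum.inr e)
        simp only [ht, Sum.elim_inr, Finset.mem_insert, Finset.mem_image, Finset.mem_filter,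
          Finset.mem_univ, true_and] at this
        rcases this with h' | ⟨q, hq1, hq2⟩
        · exfalso
          have : f (Sum.inl p) = f (Sum.inr e) := by rw [hp, h']
          exact Sum.inl_ne_inr (hfinj this)
        · obtain ⟨y', j⟩ := q
          obtain rfl : y' = y := hq1.trans hry
          refine ⟨j, ?_⟩
          have : f (Sum.inr (h j)) = f (Sum.inr e) := by rw [hh j, hq2]
          exact (Sum.inr_injective (hfinj this))
      · rintro ⟨j, rfl⟩
        refine ⟨?_, hhr j⟩
        obtain ⟨a, ha⟩ := fbij.2 (Sum.inl (h j))
        rcases a with p | e'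
        · exact ⟨p, ha⟩
        · exfalso
          have := hf (Sum.inr e')
          simp only [ht, Sum.elim_inr, Finset.mem_insert, Finset.mem_image, Finset.mem_filter,
            Finset.mem_univ, true_and] at this
          rcases this with h' | ⟨q, hq1, hq2⟩
          · rw [ha] at h'
            obtain rfl : e' = h j := (Sum.inl_injective h').symm
            have := hh j
            rw [ha] at this
            exact Sum.inl_ne_inr this
          · rw [ha] at hq2
            exact Sum.inl_ne_inr hq2.symm
    have hhinj : Function.Injective h := by
      intro i j hij
      have : f (Sum.inr (h i)) = f (Sum.inr (h j)) := by rw [hij]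
      rw [hh i, hh j] at this
      simpa using this
    rw [himg, Finset.card_image_of_injective _ hhinj]
    simp [hγ]
    rfl

lemma exact_decomp {A X Y : Type*} [Fintype A] [DecidableEq A]
    [Fintype X] [DecidableEq X] [Fintype Y] [DecidableEq Y]
    (l : A → X) (r : A → Y) :
    ∀ (k : ℕ), 0 < k → ∀ (S : Finset A),
    (∀ x, k ∣ #(S.filter fun a => l a = x)) →
    (∀ y, k ∣ #(S.filter fun a => r a = y)) →
    ∃ c : A → Fin k,
      (∀ x i, #(S.filter fun a => l a = x ∧ c a = i) = #(S.filter fun a => l a = x) / k) ∧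
      (∀ y i, #(S.filter fun a => r a = y ∧ c a = i) = #(S.filter fun a => r a = y) / k) := by
  intro k
  induction k with
  | zero => omega
  | succ m ih =>
    intro _ S hx hy
    rcases Nat.eq_zero_or_pos m with rfl | hm
    · refine ⟨fun _ => 0, fun x i => ?_, fun y i => ?_⟩ <;>
      · have hi : i = 0 := Fin.ext (Nat.lt_one_iff.1 (by simpa using i.2))
        subst hi; simp
    · obtain ⟨F, hFx, hFy⟩ := hall_factor (A := {a // a ∈ S}) (fun a => l a.1) (fun a => r a.1)
        (m + 1) (by omega)
        (fun x => by beta_reduce; rw [card_filter_subtype S (fun a => l a = x)]; exact hx x)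
        (fun y => by beta_reduce; rw [card_filter_subtype S (fun a => r a = y)]; exact hy y)
      set F' : Finset A := F.map ⟨Subtype.val, Subtype.val_injective⟩ with hF'def
      have hF'S : F' ⊆ S := by
        intro a ha
        obtain ⟨b, _, rfl⟩ := Finset.mem_map.1 ha
        exact b.2
      have hF'x : ∀ x, #(F'.filter fun a => l a = x)
          = #(S.filter fun a => l a = x) / (m + 1) := by
        intro x
        beta_reduce at hFx
        rw [hF'def, Finset.filter_map, Finset.card_map]
        simp only [Function.comp_def, Function.Embedding.coeFn_mk]
        rw [hFx x, card_filter_subtype S (fun a => l a = x)]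
      have hF'y : ∀ y, #(F'.filter fun a => r a = y)
          = #(S.filter fun a => r a = y) / (m + 1) := by
        intro y
        beta_reduce at hFy
        rw [hF'def, Finset.filter_map, Finset.card_map]
        simp only [Function.comp_def, Function.Embedding.coeFn_mk]
        rw [hFy y, card_filter_subtype S (fun a => r a = y)]
      set S' : Finset A := S \ F' with hS'def
      have hsplit : ∀ (p : A → Prop) [DecidablePred p],
          #(S.filter p) = #(F'.filter p) + #(S'.filter p) := by
        intro p _
        rw [← Finset.card_union_of_disjoint
          (Finset.disjoint_filter_filter Finset.disjoint_sdiff),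
          ← Finset.filter_union, Finset.union_sdiff_of_subset hF'S]
      have hS'x : ∀ x, #(S'.filter fun a => l a = x)
          = m * (#(S.filter fun a => l a = x) / (m + 1)) := by
        intro x
        have h1 := hsplit (fun a => l a = x)
        have h2 := hF'x x
        set T := #(S.filter fun a => l a = x) with hT
        set q := T / (m + 1) with hq
        have h3 : q * (m + 1) = T := Nat.div_mul_cancel (hx x)
        have h4 : #(S'.filter fun a => l a = x) = T - q := by omega
        rw [h4, ← h3, Nat.mul_succ, Nat.add_sub_cancel, Nat.mul_comm]
      have hS'y : ∀ y, #(S'.filter fun a => r a = y)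
          = m * (#(S.filter fun a => r a = y) / (m + 1)) := by
        intro y
        have h1 := hsplit (fun a => r a = y)
        have h2 := hF'y y
        set T := #(S.filter fun a => r a = y) with hT
        set q := T / (m + 1) with hq
        have h3 : q * (m + 1) = T := Nat.div_mul_cancel (hy y)
        have h4 : #(S'.filter fun a => r a = y) = T - q := by omega
        rw [h4, ← h3, Nat.mul_succ, Nat.add_sub_cancel, Nat.mul_comm]
      obtain ⟨c', hc'x, hc'y⟩ := ih hm S' (fun x => ⟨_, hS'x x⟩) (fun y => ⟨_, hS'y y⟩)
      refine ⟨fun a => if a ∈ F' then Fin.last m else (c' a).castSucc, fun x i => ?_,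
        fun y i => ?_⟩
      · rcases Fin.eq_castSucc_or_eq_last i with ⟨j, rfl⟩ | rfl
        · rw [hsplit]
          have e1 : #(F'.filter fun a => l a = x ∧
              (if a ∈ F' then Fin.last m else (c' a).castSucc) = j.castSucc) = 0 := by
            rw [Finset.card_eq_zero, Finset.filter_eq_empty_iff]
            intro a ha
            simp only [if_pos ha]
            rintro ⟨-, h⟩
            exact absurd h (Fin.castSucc_lt_last j).ne'
          have e2 : (S'.filter fun a => l a = x ∧
              (if a ∈ F' then Fin.last m else (c' a).castSucc) = j.castSucc)
              = S'.filter fun a => l a = x ∧ c' a = j := by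
            apply Finset.filter_congr
            intro a ha
            have : a ∉ F' := (Finset.mem_sdiff.1 ha).2
            simp [if_neg this, Fin.castSucc_inj]
          rw [e1, e2, hc'x x j, hS'x x, Nat.mul_div_cancel_left _ hm, Nat.zero_add]
        · rw [hsplit]
          have e1 : (F'.filter fun a => l a = x ∧
              (if a ∈ F' then Fin.last m else (c' a).castSucc) = Fin.last m)
              = F'.filter fun a => l a = x := by
            apply Finset.filter_congr
            intro a ha
            simp [if_pos ha]
          have e2 : #(S'.filter fun a => l a = x ∧
              (if a ∈ F' then Fin.last m else (c' a).castSucc) = Fin.last m) = 0 := by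
            rw [Finset.card_eq_zero, Finset.filter_eq_empty_iff]
            intro a ha
            have : a ∉ F' := (Finset.mem_sdiff.1 ha).2
            simp only [if_neg this]
            rintro ⟨-, h⟩
            exact absurd h (Fin.castSucc_lt_last (c' a)).ne
          rw [e1, e2, hF'x x, Nat.add_zero]
      · rcases Fin.eq_castSucc_or_eq_last i with ⟨j, rfl⟩ | rfl
        · rw [hsplit]
          have e1 : #(F'.filter fun a => r a = y ∧
              (if a ∈ F' then Fin.last m else (c' a).castSucc) = j.castSucc) = 0 := by
            rw [Finset.card_eq_zero, Finset.filter_eq_empty_iff]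
            intro a ha
            simp only [if_pos ha]
            rintro ⟨-, h⟩
            exact absurd h (Fin.castSucc_lt_last j).ne'
          have e2 : (S'.filter fun a => r a = y ∧
              (if a ∈ F' then Fin.last m else (c' a).castSucc) = j.castSucc)
              = S'.filter fun a => r a = y ∧ c' a = j := by
            apply Finset.filter_congr
            intro a ha
            have : a ∉ F' := (Finset.mem_sdiff.1 ha).2
            simp [if_neg this, Fin.castSucc_inj]
          rw [e1, e2, hc'y y j, hS'y y, Nat.mul_div_cancel_left _ hm, Nat.zero_add]
        · rw [hsplit]
          have e1 : (F'.filter fun a => r a = y ∧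
              (if a ∈ F' then Fin.last m else (c' a).castSucc) = Fin.last m)
              = F'.filter fun a => r a = y := by
            apply Finset.filter_congr
            intro a ha
            simp [if_pos ha]
          have e2 : #(S'.filter fun a => r a = y ∧
              (if a ∈ F' then Fin.last m else (c' a).castSucc) = Fin.last m) = 0 := by
            rw [Finset.card_eq_zero, Finset.filter_eq_empty_iff]
            intro a ha
            have : a ∉ F' := (Finset.mem_sdiff.1 ha).2
            simp only [if_neg this]
            rintro ⟨-, h⟩
            exact absurd h (Fin.castSucc_lt_last (c' a)).ne
          rw [e1, e2, hF'y y, Nat.add_zero]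

/-- residue needed to top `n` up to a multiple of `k` -/
def res (k n : ℕ) : ℕ := if n % k = 0 then 0 else k - n % k

lemma res_lt {k : ℕ} (hk : 0 < k) (n : ℕ) : res k n < k := by
  unfold res; split_ifs with h
  · exact hk
  · have h1 : n % k < k := Nat.mod_lt _ hk
    omega

lemma res_dvd {k : ℕ} (hk : 0 < k) (n : ℕ) : k ∣ n + res k n := by
  unfold res; split_ifs with h
  · simpa using Nat.dvd_of_mod_eq_zero h
  · refine ⟨n / k + 1, ?_⟩
    have h0 := Nat.mod_add_div n k
    have h1 : n % k < k := Nat.mod_lt _ hk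
    rw [Nat.mul_add, Nat.mul_one]
    set K := k * (n / k) with hK
    omega

lemma res_cast {k : ℕ} (hk : 0 < k) (n : ℕ) : ((res k n : ℕ) : ZMod k) = -(n : ZMod k) := by
  unfold res; split_ifs with h
  · have : (n : ZMod k) = 0 := (ZMod.natCast_eq_zero_iff n k).2
      (Nat.dvd_of_mod_eq_zero h)
    simp [this]
  · have hle : n % k ≤ k := le_of_lt (Nat.mod_lt _ hk)
    rw [Nat.cast_sub hle, ZMod.natCast_self, zero_sub, ZMod.natCast_mod]

lemma res_eq_zero {k : ℕ} (hk : 0 < k) {n : ℕ} (h : res k n = 0) : n % k = 0 := by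
  unfold res at h; split_ifs at h with h'
  · exact h'
  · have h1 : n % k < k := Nat.mod_lt _ hk
    omega

lemma res_pair {k : ℕ} (hk : 0 < k) {n : ℕ} (hn : n < k) :
    n + res k n = if n = 0 then 0 else k := by
  unfold res; rw [Nat.mod_eq_of_lt hn]; split_ifs <;> omega

section Gadget

variable [Fintype V] [Fintype E] [DecidableEq V]

def n1f (ends : E → V × V) (k : ℕ) : V → ℕ := fun u => res k (outdeg ends univ u)
def n3f (ends : E → V × V) (k : ℕ) : V → ℕ := fun u => res k (indeg ends univ u)
def n2f (ends : E → V × V) (k : ℕ) : V → ℕ := fun u => res k (n1f ends k u)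
def n4f (ends : E → V × V) (k : ℕ) : V → ℕ := fun u =>
  if outdeg ends univ u % k = indeg ends univ u % k then 0 else res k (n3f ends k u)
def zdf (ends : E → V × V) (k : ℕ) : ℕ :=
  ∑ u : V, (if outdeg ends univ u % k = indeg ends univ u % k then 0 else n2f ends k u)
def t0f (ends : E → V × V) (k : ℕ) : ℕ := res k (zdf ends k)

/-- auxiliary edge type -/
abbrev AuxE (ends : E → V × V) (k : ℕ) : Type _ :=
  E ⊕ ((Σ u : V, Fin (n1f ends k u)) ⊕ ((Σ u : V, Fin (n2f ends k u)) ⊕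
    ((Σ u : V, Fin (n3f ends k u)) ⊕ ((Σ u : V, Fin (n4f ends k u)) ⊕ Fin (t0f ends k)))))

def lmap (ends : E → V × V) (k : ℕ) : AuxE ends k → V ⊕ (V ⊕ Unit)
  | .inl e => .inl (ends e).1
  | .inr (.inl p) => .inl p.1
  | .inr (.inr (.inl p)) =>
      if outdeg ends univ p.1 % k = indeg ends univ p.1 % k
      then .inr (.inl p.1) else .inr (.inr ())
  | .inr (.inr (.inr (.inl p))) => .inr (.inl p.1)
  | .inr (.inr (.inr (.inr (.inl p)))) => .inr (.inl p.1)
  | .inr (.inr (.inr (.inr (.inr _)))) => .inr (.inr ())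

def rmap (ends : E → V × V) (k : ℕ) : AuxE ends k → V ⊕ (V ⊕ Unit)
  | .inl e => .inl (ends e).2
  | .inr (.inl p) => .inr (.inl p.1)
  | .inr (.inr (.inl p)) => .inr (.inl p.1)
  | .inr (.inr (.inr (.inl p))) => .inl p.1
  | .inr (.inr (.inr (.inr (.inl p)))) => .inr (.inr ())
  | .inr (.inr (.inr (.inr (.inr _)))) => .inr (.inr ())

end Gadget

-- splitting a filter-card over the auxiliary type
lemma card_filter_aux [Fintype V] [Fintype E] [DecidableEq V]
    (ends : E → V × V) (k : ℕ)
    (P : AuxE ends k → Prop) [DecidablePred P] :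
    #(univ.filter P) = #(univ.filter fun e : E => P (Sum.inl e))
      + (∑ u : V, #(univ.filter fun j : Fin (n1f ends k u) => P (Sum.inr (Sum.inl ⟨u, j⟩))))
      + (∑ u : V, #(univ.filter fun j : Fin (n2f ends k u) =>
          P (Sum.inr (Sum.inr (Sum.inl ⟨u, j⟩)))))
      + (∑ u : V, #(univ.filter fun j : Fin (n3f ends k u) =>
          P (Sum.inr (Sum.inr (Sum.inr (Sum.inl ⟨u, j⟩))))))
      + (∑ u : V, #(univ.filter fun j : Fin (n4f ends k u) =>
          P (Sum.inr (Sum.inr (Sum.inr (Sum.inr (Sum.inl ⟨u, j⟩)))))))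
      + #(univ.filter fun j : Fin (t0f ends k) =>
          P (Sum.inr (Sum.inr (Sum.inr (Sum.inr (Sum.inr j)))))) := by
  classical
  rw [card_filter_sum (p := P), card_filter_sum, card_filter_sum, card_filter_sum,
    card_filter_sum, card_filter_sigma, card_filter_sigma, card_filter_sigma, card_filter_sigma]
  ring

section Sizes
variable [Fintype V] [Fintype E] [DecidableEq V] (ends : E → V × V) (k : ℕ)

lemma Lsize1 (v : V) :
    #(univ.filter fun a : AuxE ends k => lmap ends k a = Sum.inl v)
      = outdeg ends univ v + n1f ends k v := by
  classical
  rw [card_filter_aux]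
  have p1 : #(univ.filter fun e : E => lmap ends k (Sum.inl e) = Sum.inl v)
      = outdeg ends univ v := by
    simp only [lmap, Sum.inl.injEq]; rfl
  have p2 : (∑ u : V, #(univ.filter fun j : Fin (n1f ends k u) =>
      lmap ends k (Sum.inr (Sum.inl ⟨u, j⟩)) = Sum.inl v)) = n1f ends k v := by
    rw [Finset.sum_eq_single v]
    · simp [lmap]
    · intro u _ hu; simp [lmap, hu]
    · intro h; exact absurd (mem_univ v) h
  have p3 : (∑ u : V, #(univ.filter fun j : Fin (n2f ends k u) =>
      lmap ends k (Sum.inr (Sum.inr (Sum.inl ⟨u, j⟩))) = Sum.inl v)) = 0 := by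
    refine Finset.sum_eq_zero fun u _ => ?_
    rw [Finset.card_eq_zero, Finset.filter_eq_empty_iff]
    intro j _
    simp only [lmap]
    split_ifs <;> simp
  have p4 : (∑ u : V, #(univ.filter fun j : Fin (n3f ends k u) =>
      lmap ends k (Sum.inr (Sum.inr (Sum.inr (Sum.inl ⟨u, j⟩)))) = Sum.inl v)) = 0 := by
    refine Finset.sum_eq_zero fun u _ => by simp [lmap]
  have p5 : (∑ u : V, #(univ.filter fun j : Fin (n4f ends k u) =>
      lmap ends k (Sum.inr (Sum.inr (Sum.inr (Sum.inr (Sum.inl ⟨u, j⟩))))) = Sum.inl v)) = 0 := by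
    refine Finset.sum_eq_zero fun u _ => by simp [lmap]
  have p6 : #(univ.filter fun j : Fin (t0f ends k) =>
      lmap ends k (Sum.inr (Sum.inr (Sum.inr (Sum.inr (Sum.inr j))))) = Sum.inl v) = 0 := by
    simp [lmap]
  rw [p1, p2, p3, p4, p5, p6]
  omega

lemma Lsize2 (v : V) :
    #(univ.filter fun a : AuxE ends k => lmap ends k a = Sum.inr (Sum.inl v))
      = (if outdeg ends univ v % k = indeg ends univ v % k then n2f ends k v else 0)
        + (n3f ends k v + n4f ends k v) := by
  classical
  rw [card_filter_aux]
  have p1 : #(univ.filter fun e : E => lmap ends k (Sum.inl e) = Sum.inr (Sum.inl v)) = 0 := by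
    simp [lmap]
  have p2 : (∑ u : V, #(univ.filter fun j : Fin (n1f ends k u) =>
      lmap ends k (Sum.inr (Sum.inl ⟨u, j⟩)) = Sum.inr (Sum.inl v))) = 0 := by
    refine Finset.sum_eq_zero fun u _ => by simp [lmap]
  have p3 : (∑ u : V, #(univ.filter fun j : Fin (n2f ends k u) =>
      lmap ends k (Sum.inr (Sum.inr (Sum.inl ⟨u, j⟩))) = Sum.inr (Sum.inl v)))
      = (if outdeg ends univ v % k = indeg ends univ v % k then n2f ends k v else 0) := by
    rw [Finset.sum_eq_single v]
    · simp only [lmap]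
      split_ifs with hb <;> simp
    · intro u _ hu
      rw [Finset.card_eq_zero, Finset.filter_eq_empty_iff]
      intro j _
      simp only [lmap]
      split_ifs <;> simp [hu]
    · intro h; exact absurd (mem_univ v) h
  have p4 : (∑ u : V, #(univ.filter fun j : Fin (n3f ends k u) =>
      lmap ends k (Sum.inr (Sum.inr (Sum.inr (Sum.inl ⟨u, j⟩)))) = Sum.inr (Sum.inl v)))
      = n3f ends k v := by
    rw [Finset.sum_eq_single v]
    · simp [lmap]
    · intro u _ hu; simp [lmap, hu]
    · intro h; exact absurd (mem_univ v) h
  have p5 : (∑ u : V, #(univ.filter fun j : Fin (n4f ends k u) =>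
      lmap ends k (Sum.inr (Sum.inr (Sum.inr (Sum.inr (Sum.inl ⟨u, j⟩))))) = Sum.inr (Sum.inl v)))
      = n4f ends k v := by
    rw [Finset.sum_eq_single v]
    · simp [lmap]
    · intro u _ hu; simp [lmap, hu]
    · intro h; exact absurd (mem_univ v) h
  have p6 : #(univ.filter fun j : Fin (t0f ends k) =>
      lmap ends k (Sum.inr (Sum.inr (Sum.inr (Sum.inr (Sum.inr j))))) = Sum.inr (Sum.inl v))
      = 0 := by
    simp [lmap]
  rw [p1, p2, p3, p4, p5, p6]
  omega

lemma Lsize3 :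
    #(univ.filter fun a : AuxE ends k => lmap ends k a = Sum.inr (Sum.inr ()))
      = zdf ends k + t0f ends k := by
  classical
  rw [card_filter_aux]
  have p1 : #(univ.filter fun e : E => lmap ends k (Sum.inl e) = Sum.inr (Sum.inr ())) = 0 := by
    simp [lmap]
  have p2 : (∑ u : V, #(univ.filter fun j : Fin (n1f ends k u) =>
      lmap ends k (Sum.inr (Sum.inl ⟨u, j⟩)) = Sum.inr (Sum.inr ()))) = 0 := by
    refine Finset.sum_eq_zero fun u _ => by simp [lmap]
  have p3 : (∑ u : V, #(univ.filter fun j : Fin (n2f ends k u) =>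
      lmap ends k (Sum.inr (Sum.inr (Sum.inl ⟨u, j⟩))) = Sum.inr (Sum.inr ())))
      = zdf ends k := by
    rw [zdf]
    refine Finset.sum_congr rfl fun u _ => ?_
    simp only [lmap]
    split_ifs with hb <;> simp
  have p4 : (∑ u : V, #(univ.filter fun j : Fin (n3f ends k u) =>
      lmap ends k (Sum.inr (Sum.inr (Sum.inr (Sum.inl ⟨u, j⟩)))) = Sum.inr (Sum.inr ()))) = 0 := by
    refine Finset.sum_eq_zero fun u _ => by simp [lmap]
  have p5 : (∑ u : V, #(univ.filter fun j : Fin (n4f ends k u) =>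
      lmap ends k (Sum.inr (Sum.inr (Sum.inr (Sum.inr (Sum.inl ⟨u, j⟩))))) = Sum.inr (Sum.inr ())))
      = 0 := by
    refine Finset.sum_eq_zero fun u _ => by simp [lmap]
  have p6 : #(univ.filter fun j : Fin (t0f ends k) =>
      lmap ends k (Sum.inr (Sum.inr (Sum.inr (Sum.inr (Sum.inr j))))) = Sum.inr (Sum.inr ()))
      = t0f ends k := by
    simp [lmap]
  rw [p1, p2, p3, p4, p5, p6]
  omega

lemma Rsize1 (v : V) :
    #(univ.filter fun a : AuxE ends k => rmap ends k a = Sum.inl v)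
      = indeg ends univ v + n3f ends k v := by
  classical
  rw [card_filter_aux]
  have p1 : #(univ.filter fun e : E => rmap ends k (Sum.inl e) = Sum.inl v)
      = indeg ends univ v := by
    simp only [rmap, Sum.inl.injEq]; rfl
  have p2 : (∑ u : V, #(univ.filter fun j : Fin (n1f ends k u) =>
      rmap ends k (Sum.inr (Sum.inl ⟨u, j⟩)) = Sum.inl v)) = 0 := by
    refine Finset.sum_eq_zero fun u _ => by simp [rmap]
  have p3 : (∑ u : V, #(univ.filter fun j : Fin (n2f ends k u) =>
      rmap ends k (Sum.inr (Sum.inr (Sum.inl ⟨u, j⟩))) = Sum.inl v)) = 0 := by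
    refine Finset.sum_eq_zero fun u _ => by simp [rmap]
  have p4 : (∑ u : V, #(univ.filter fun j : Fin (n3f ends k u) =>
      rmap ends k (Sum.inr (Sum.inr (Sum.inr (Sum.inl ⟨u, j⟩)))) = Sum.inl v))
      = n3f ends k v := by
    rw [Finset.sum_eq_single v]
    · simp [rmap]
    · intro u _ hu; simp [rmap, hu]
    · intro h; exact absurd (mem_univ v) h
  have p5 : (∑ u : V, #(univ.filter fun j : Fin (n4f ends k u) =>
      rmap ends k (Sum.inr (Sum.inr (Sum.inr (Sum.inr (Sum.inl ⟨u, j⟩))))) = Sum.inl v)) = 0 := by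
    refine Finset.sum_eq_zero fun u _ => by simp [rmap]
  have p6 : #(univ.filter fun j : Fin (t0f ends k) =>
      rmap ends k (Sum.inr (Sum.inr (Sum.inr (Sum.inr (Sum.inr j))))) = Sum.inl v) = 0 := by
    simp [rmap]
  rw [p1, p2, p3, p4, p5, p6]
  omega

lemma Rsize2 (v : V) :
    #(univ.filter fun a : AuxE ends k => rmap ends k a = Sum.inr (Sum.inl v))
      = n1f ends k v + n2f ends k v := by
  classical
  rw [card_filter_aux]
  have p1 : #(univ.filter fun e : E => rmap ends k (Sum.inl e) = Sum.inr (Sum.inl v)) = 0 := by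
    simp [rmap]
  have p2 : (∑ u : V, #(univ.filter fun j : Fin (n1f ends k u) =>
      rmap ends k (Sum.inr (Sum.inl ⟨u, j⟩)) = Sum.inr (Sum.inl v))) = n1f ends k v := by
    rw [Finset.sum_eq_single v]
    · simp [rmap]
    · intro u _ hu; simp [rmap, hu]
    · intro h; exact absurd (mem_univ v) h
  have p3 : (∑ u : V, #(univ.filter fun j : Fin (n2f ends k u) =>
      rmap ends k (Sum.inr (Sum.inr (Sum.inl ⟨u, j⟩))) = Sum.inr (Sum.inl v)))
      = n2f ends k v := by
    rw [Finset.sum_eq_single v]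
    · simp [rmap]
    · intro u _ hu; simp [rmap, hu]
    · intro h; exact absurd (mem_univ v) h
  have p4 : (∑ u : V, #(univ.filter fun j : Fin (n3f ends k u) =>
      rmap ends k (Sum.inr (Sum.inr (Sum.inr (Sum.inl ⟨u, j⟩)))) = Sum.inr (Sum.inl v))) = 0 := by
    refine Finset.sum_eq_zero fun u _ => by simp [rmap]
  have p5 : (∑ u : V, #(univ.filter fun j : Fin (n4f ends k u) =>
      rmap ends k (Sum.inr (Sum.inr (Sum.inr (Sum.inr (Sum.inl ⟨u, j⟩))))) = Sum.inr (Sum.inl v)))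
      = 0 := by
    refine Finset.sum_eq_zero fun u _ => by simp [rmap]
  have p6 : #(univ.filter fun j : Fin (t0f ends k) =>
      rmap ends k (Sum.inr (Sum.inr (Sum.inr (Sum.inr (Sum.inr j))))) = Sum.inr (Sum.inl v))
      = 0 := by
    simp [rmap]
  rw [p1, p2, p3, p4, p5, p6]
  omega

lemma Rsize3 :
    #(univ.filter fun a : AuxE ends k => rmap ends k a = Sum.inr (Sum.inr ()))
      = (∑ u : V, n4f ends k u) + t0f ends k := by
  classical
  rw [card_filter_aux]
  have p1 : #(univ.filter fun e : E => rmap ends k (Sum.inl e) = Sum.inr (Sum.inr ())) = 0 := by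
    simp [rmap]
  have p2 : (∑ u : V, #(univ.filter fun j : Fin (n1f ends k u) =>
      rmap ends k (Sum.inr (Sum.inl ⟨u, j⟩)) = Sum.inr (Sum.inr ()))) = 0 := by
    refine Finset.sum_eq_zero fun u _ => by simp [rmap]
  have p3 : (∑ u : V, #(univ.filter fun j : Fin (n2f ends k u) =>
      rmap ends k (Sum.inr (Sum.inr (Sum.inl ⟨u, j⟩))) = Sum.inr (Sum.inr ()))) = 0 := by
    refine Finset.sum_eq_zero fun u _ => by simp [rmap]
  have p4 : (∑ u : V, #(univ.filter fun j : Fin (n3f ends k u) =>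
      rmap ends k (Sum.inr (Sum.inr (Sum.inr (Sum.inl ⟨u, j⟩)))) = Sum.inr (Sum.inr ()))) = 0 := by
    refine Finset.sum_eq_zero fun u _ => by simp [rmap]
  have p5 : (∑ u : V, #(univ.filter fun j : Fin (n4f ends k u) =>
      rmap ends k (Sum.inr (Sum.inr (Sum.inr (Sum.inr (Sum.inl ⟨u, j⟩))))) = Sum.inr (Sum.inr ())))
      = ∑ u : V, n4f ends k u := by
    refine Finset.sum_congr rfl fun u _ => by simp [rmap]
  have p6 : #(univ.filter fun j : Fin (t0f ends k) =>
      rmap ends k (Sum.inr (Sum.inr (Sum.inr (Sum.inr (Sum.inr j))))) = Sum.inr (Sum.inr ()))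
      = t0f ends k := by
    simp [rmap]
  rw [p1, p2, p3, p4, p5, p6]
  omega

end Sizes

section Keys
variable [Fintype V] [Fintype E] [DecidableEq V] (ends : E → V × V) (k : ℕ)

lemma key1 (c' : AuxE ends k → Fin k) (v : V) (i : Fin k)
    (hcl : #(univ.filter fun a : AuxE ends k => lmap ends k a = Sum.inl v ∧ c' a = i)
      = #(univ.filter fun a : AuxE ends k => lmap ends k a = Sum.inl v) / k) :
    outdeg ends (univ.filter fun e => c' (Sum.inl e) = i) v
      + #(univ.filter fun j : Fin (n1f ends k v) => c' (Sum.inr (Sum.inl ⟨v, j⟩)) = i)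
      = (outdeg ends univ v + n1f ends k v) / k := by
  classical
  rw [Lsize1, card_filter_aux] at hcl
  have p1 : #(univ.filter fun e : E =>
      lmap ends k (Sum.inl e) = Sum.inl v ∧ c' (Sum.inl e) = i)
      = outdeg ends (univ.filter fun e => c' (Sum.inl e) = i) v := by
    rw [outdeg, Finset.filter_filter]
    apply congrArg
    ext e
    simp only [Finset.mem_filter, Finset.mem_univ, true_and, lmap, Sum.inl.injEq]
    tauto
  have p2 : (∑ u : V, #(univ.filter fun j : Fin (n1f ends k u) =>
      lmap ends k (Sum.inr (Sum.inl ⟨u, j⟩)) = Sum.inl v ∧ c' (Sum.inr (Sum.inl ⟨u, j⟩)) = i))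
      = #(univ.filter fun j : Fin (n1f ends k v) => c' (Sum.inr (Sum.inl ⟨v, j⟩)) = i) := by
    rw [Finset.sum_eq_single v]
    · apply congrArg; ext j; simp [lmap]
    · intro u _ hu
      rw [Finset.card_eq_zero, Finset.filter_eq_empty_iff]
      intro j _
      simp [lmap, hu]
    · intro h; exact absurd (mem_univ v) h
  have p3 : (∑ u : V, #(univ.filter fun j : Fin (n2f ends k u) =>
      lmap ends k (Sum.inr (Sum.inr (Sum.inl ⟨u, j⟩))) = Sum.inl v
        ∧ c' (Sum.inr (Sum.inr (Sum.inl ⟨u, j⟩))) = i)) = 0 := by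
    refine Finset.sum_eq_zero fun u _ => ?_
    rw [Finset.card_eq_zero, Finset.filter_eq_empty_iff]
    intro j _
    simp only [lmap]
    split_ifs <;> simp
  have p4 : (∑ u : V, #(univ.filter fun j : Fin (n3f ends k u) =>
      lmap ends k (Sum.inr (Sum.inr (Sum.inr (Sum.inl ⟨u, j⟩)))) = Sum.inl v
        ∧ c' (Sum.inr (Sum.inr (Sum.inr (Sum.inl ⟨u, j⟩)))) = i)) = 0 := by
    refine Finset.sum_eq_zero fun u _ => by simp [lmap]
  have p5 : (∑ u : V, #(univ.filter fun j : Fin (n4f ends k u) =>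
      lmap ends k (Sum.inr (Sum.inr (Sum.inr (Sum.inr (Sum.inl ⟨u, j⟩))))) = Sum.inl v
        ∧ c' (Sum.inr (Sum.inr (Sum.inr (Sum.inr (Sum.inl ⟨u, j⟩))))) = i)) = 0 := by
    refine Finset.sum_eq_zero fun u _ => by simp [lmap]
  have p6 : #(univ.filter fun j : Fin (t0f ends k) =>
      lmap ends k (Sum.inr (Sum.inr (Sum.inr (Sum.inr (Sum.inr j))))) = Sum.inl v
        ∧ c' (Sum.inr (Sum.inr (Sum.inr (Sum.inr (Sum.inr j))))) = i) = 0 := by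
    simp [lmap]
  rw [p1, p2, p3, p4, p5, p6] at hcl
  omega

lemma key2 (c' : AuxE ends k → Fin k) (v : V) (i : Fin k)
    (hcr : #(univ.filter fun a : AuxE ends k => rmap ends k a = Sum.inl v ∧ c' a = i)
      = #(univ.filter fun a : AuxE ends k => rmap ends k a = Sum.inl v) / k) :
    indeg ends (univ.filter fun e => c' (Sum.inl e) = i) v
      + #(univ.filter fun j : Fin (n3f ends k v) =>
          c' (Sum.inr (Sum.inr (Sum.inr (Sum.inl ⟨v, j⟩)))) = i)
      = (indeg ends univ v + n3f ends k v) / k := by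
  classical
  rw [Rsize1, card_filter_aux] at hcr
  have p1 : #(univ.filter fun e : E =>
      rmap ends k (Sum.inl e) = Sum.inl v ∧ c' (Sum.inl e) = i)
      = indeg ends (univ.filter fun e => c' (Sum.inl e) = i) v := by
    rw [indeg, Finset.filter_filter]
    apply congrArg
    ext e
    simp only [Finset.mem_filter, Finset.mem_univ, true_and, rmap, Sum.inl.injEq]
    tauto
  have p2 : (∑ u : V, #(univ.filter fun j : Fin (n1f ends k u) =>
      rmap ends k (Sum.inr (Sum.inl ⟨u, j⟩)) = Sum.inl v
        ∧ c' (Sum.inr (Sum.inl ⟨u, j⟩)) = i)) = 0 := by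
    refine Finset.sum_eq_zero fun u _ => by simp [rmap]
  have p3 : (∑ u : V, #(univ.filter fun j : Fin (n2f ends k u) =>
      rmap ends k (Sum.inr (Sum.inr (Sum.inl ⟨u, j⟩))) = Sum.inl v
        ∧ c' (Sum.inr (Sum.inr (Sum.inl ⟨u, j⟩))) = i)) = 0 := by
    refine Finset.sum_eq_zero fun u _ => by simp [rmap]
  have p4 : (∑ u : V, #(univ.filter fun j : Fin (n3f ends k u) =>
      rmap ends k (Sum.inr (Sum.inr (Sum.inr (Sum.inl ⟨u, j⟩)))) = Sum.inl v
        ∧ c' (Sum.inr (Sum.inr (Sum.inr (Sum.inl ⟨u, j⟩)))) = i))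
      = #(univ.filter fun j : Fin (n3f ends k v) =>
          c' (Sum.inr (Sum.inr (Sum.inr (Sum.inl ⟨v, j⟩)))) = i) := by
    rw [Finset.sum_eq_single v]
    · apply congrArg; ext j; simp [rmap]
    · intro u _ hu
      rw [Finset.card_eq_zero, Finset.filter_eq_empty_iff]
      intro j _
      simp [rmap, hu]
    · intro h; exact absurd (mem_univ v) h
  have p5 : (∑ u : V, #(univ.filter fun j : Fin (n4f ends k u) =>
      rmap ends k (Sum.inr (Sum.inr (Sum.inr (Sum.inr (Sum.inl ⟨u, j⟩))))) = Sum.inl v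
        ∧ c' (Sum.inr (Sum.inr (Sum.inr (Sum.inr (Sum.inl ⟨u, j⟩))))) = i)) = 0 := by
    refine Finset.sum_eq_zero fun u _ => by simp [rmap]
  have p6 : #(univ.filter fun j : Fin (t0f ends k) =>
      rmap ends k (Sum.inr (Sum.inr (Sum.inr (Sum.inr (Sum.inr j))))) = Sum.inl v
        ∧ c' (Sum.inr (Sum.inr (Sum.inr (Sum.inr (Sum.inr j))))) = i) = 0 := by
    simp [rmap]
  rw [p1, p2, p3, p4, p5, p6] at hcr
  omega

lemma key3 (c' : AuxE ends k → Fin k) (v : V) (i : Fin k)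
    (hcr : #(univ.filter fun a : AuxE ends k => rmap ends k a = Sum.inr (Sum.inl v) ∧ c' a = i)
      = #(univ.filter fun a : AuxE ends k => rmap ends k a = Sum.inr (Sum.inl v)) / k) :
    #(univ.filter fun j : Fin (n1f ends k v) => c' (Sum.inr (Sum.inl ⟨v, j⟩)) = i)
      + #(univ.filter fun j : Fin (n2f ends k v) => c' (Sum.inr (Sum.inr (Sum.inl ⟨v, j⟩))) = i)
      = (n1f ends k v + n2f ends k v) / k := by
  classical
  rw [Rsize2, card_filter_aux] at hcr
  have p1 : #(univ.filter fun e : E =>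
      rmap ends k (Sum.inl e) = Sum.inr (Sum.inl v) ∧ c' (Sum.inl e) = i) = 0 := by
    simp [rmap]
  have p2 : (∑ u : V, #(univ.filter fun j : Fin (n1f ends k u) =>
      rmap ends k (Sum.inr (Sum.inl ⟨u, j⟩)) = Sum.inr (Sum.inl v)
        ∧ c' (Sum.inr (Sum.inl ⟨u, j⟩)) = i))
      = #(univ.filter fun j : Fin (n1f ends k v) => c' (Sum.inr (Sum.inl ⟨v, j⟩)) = i) := by
    rw [Finset.sum_eq_single v]
    · apply congrArg; ext j; simp [rmap]
    · intro u _ hu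
      rw [Finset.card_eq_zero, Finset.filter_eq_empty_iff]
      intro j _
      simp [rmap, hu]
    · intro h; exact absurd (mem_univ v) h
  have p3 : (∑ u : V, #(univ.filter fun j : Fin (n2f ends k u) =>
      rmap ends k (Sum.inr (Sum.inr (Sum.inl ⟨u, j⟩))) = Sum.inr (Sum.inl v)
        ∧ c' (Sum.inr (Sum.inr (Sum.inl ⟨u, j⟩))) = i))
      = #(univ.filter fun j : Fin (n2f ends k v) =>
          c' (Sum.inr (Sum.inr (Sum.inl ⟨v, j⟩))) = i) := by
    rw [Finset.sum_eq_single v]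
    · apply congrArg; ext j; simp [rmap]
    · intro u _ hu
      rw [Finset.card_eq_zero, Finset.filter_eq_empty_iff]
      intro j _
      simp [rmap, hu]
    · intro h; exact absurd (mem_univ v) h
  have p4 : (∑ u : V, #(univ.filter fun j : Fin (n3f ends k u) =>
      rmap ends k (Sum.inr (Sum.inr (Sum.inr (Sum.inl ⟨u, j⟩)))) = Sum.inr (Sum.inl v)
        ∧ c' (Sum.inr (Sum.inr (Sum.inr (Sum.inl ⟨u, j⟩)))) = i)) = 0 := by
    refine Finset.sum_eq_zero fun u _ => by simp [rmap]
  have p5 : (∑ u : V, #(univ.filter fun j : Fin (n4f ends k u) =>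
      rmap ends k (Sum.inr (Sum.inr (Sum.inr (Sum.inr (Sum.inl ⟨u, j⟩))))) = Sum.inr (Sum.inl v)
        ∧ c' (Sum.inr (Sum.inr (Sum.inr (Sum.inr (Sum.inl ⟨u, j⟩))))) = i)) = 0 := by
    refine Finset.sum_eq_zero fun u _ => by simp [rmap]
  have p6 : #(univ.filter fun j : Fin (t0f ends k) =>
      rmap ends k (Sum.inr (Sum.inr (Sum.inr (Sum.inr (Sum.inr j))))) = Sum.inr (Sum.inl v)
        ∧ c' (Sum.inr (Sum.inr (Sum.inr (Sum.inr (Sum.inr j))))) = i) = 0 := by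
    simp [rmap]
  rw [p1, p2, p3, p4, p5, p6] at hcr
  omega

lemma key4 (c' : AuxE ends k → Fin k) (v : V) (i : Fin k)
    (hcl : #(univ.filter fun a : AuxE ends k => lmap ends k a = Sum.inr (Sum.inl v) ∧ c' a = i)
      = #(univ.filter fun a : AuxE ends k => lmap ends k a = Sum.inr (Sum.inl v)) / k) :
    (if outdeg ends univ v % k = indeg ends univ v % k
      then #(univ.filter fun j : Fin (n2f ends k v) =>
        c' (Sum.inr (Sum.inr (Sum.inl ⟨v, j⟩))) = i) else 0)
      + #(univ.filter fun j : Fin (n3f ends k v) =>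
          c' (Sum.inr (Sum.inr (Sum.inr (Sum.inl ⟨v, j⟩)))) = i)
      + #(univ.filter fun j : Fin (n4f ends k v) =>
          c' (Sum.inr (Sum.inr (Sum.inr (Sum.inr (Sum.inl ⟨v, j⟩))))) = i)
      = ((if outdeg ends univ v % k = indeg ends univ v % k then n2f ends k v else 0)
          + (n3f ends k v + n4f ends k v)) / k := by
  classical
  rw [Lsize2, card_filter_aux] at hcl
  have p1 : #(univ.filter fun e : E =>
      lmap ends k (Sum.inl e) = Sum.inr (Sum.inl v) ∧ c' (Sum.inl e) = i) = 0 := by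
    simp [lmap]
  have p2 : (∑ u : V, #(univ.filter fun j : Fin (n1f ends k u) =>
      lmap ends k (Sum.inr (Sum.inl ⟨u, j⟩)) = Sum.inr (Sum.inl v)
        ∧ c' (Sum.inr (Sum.inl ⟨u, j⟩)) = i)) = 0 := by
    refine Finset.sum_eq_zero fun u _ => by simp [lmap]
  have p3 : (∑ u : V, #(univ.filter fun j : Fin (n2f ends k u) =>
      lmap ends k (Sum.inr (Sum.inr (Sum.inl ⟨u, j⟩))) = Sum.inr (Sum.inl v)
        ∧ c' (Sum.inr (Sum.inr (Sum.inl ⟨u, j⟩))) = i))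
      = (if outdeg ends univ v % k = indeg ends univ v % k
          then #(univ.filter fun j : Fin (n2f ends k v) =>
            c' (Sum.inr (Sum.inr (Sum.inl ⟨v, j⟩))) = i) else 0) := by
    rw [Finset.sum_eq_single v]
    · split_ifs with hb
      · apply congrArg; ext j; simp [lmap, hb]
      · rw [Finset.card_eq_zero, Finset.filter_eq_empty_iff]
        intro j _
        simp [lmap, hb]
    · intro u _ hu
      rw [Finset.card_eq_zero, Finset.filter_eq_empty_iff]
      intro j _
      simp only [lmap]
      split_ifs <;> simp [hu]
    · intro h; exact absurd (mem_univ v) h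
  have p4 : (∑ u : V, #(univ.filter fun j : Fin (n3f ends k u) =>
      lmap ends k (Sum.inr (Sum.inr (Sum.inr (Sum.inl ⟨u, j⟩)))) = Sum.inr (Sum.inl v)
        ∧ c' (Sum.inr (Sum.inr (Sum.inr (Sum.inl ⟨u, j⟩)))) = i))
      = #(univ.filter fun j : Fin (n3f ends k v) =>
          c' (Sum.inr (Sum.inr (Sum.inr (Sum.inl ⟨v, j⟩)))) = i) := by
    rw [Finset.sum_eq_single v]
    · apply congrArg; ext j; simp [lmap]
    · intro u _ hu
      rw [Finset.card_eq_zero, Finset.filter_eq_empty_iff]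
      intro j _
      simp [lmap, hu]
    · intro h; exact absurd (mem_univ v) h
  have p5 : (∑ u : V, #(univ.filter fun j : Fin (n4f ends k u) =>
      lmap ends k (Sum.inr (Sum.inr (Sum.inr (Sum.inr (Sum.inl ⟨u, j⟩))))) = Sum.inr (Sum.inl v)
        ∧ c' (Sum.inr (Sum.inr (Sum.inr (Sum.inr (Sum.inl ⟨u, j⟩))))) = i))
      = #(univ.filter fun j : Fin (n4f ends k v) =>
          c' (Sum.inr (Sum.inr (Sum.inr (Sum.inr (Sum.inl ⟨v, j⟩))))) = i) := by
    rw [Finset.sum_eq_single v]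
    · apply congrArg; ext j; simp [lmap]
    · intro u _ hu
      rw [Finset.card_eq_zero, Finset.filter_eq_empty_iff]
      intro j _
      simp [lmap, hu]
    · intro h; exact absurd (mem_univ v) h
  have p6 : #(univ.filter fun j : Fin (t0f ends k) =>
      lmap ends k (Sum.inr (Sum.inr (Sum.inr (Sum.inr (Sum.inr j))))) = Sum.inr (Sum.inl v)
        ∧ c' (Sum.inr (Sum.inr (Sum.inr (Sum.inr (Sum.inr j))))) = i) = 0 := by
    simp [lmap]
  rw [p1, p2, p3, p4, p5, p6] at hcl
  omega

end Keys

lemma real_bound {k out lam dpv n1v : ℕ} (hk : 0 < k)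
    (h1 : out + lam = (dpv + n1v) / k) (hdvd : k ∣ dpv + n1v) (hn1k : n1v < k)
    (hlam1 : lam ≤ 1) (hlamn : lam ≤ n1v) :
    |(out : ℝ) - (dpv : ℝ) / (k : ℝ)| < 1 := by
  have hkR : (0:ℝ) < k := by exact_mod_cast hk
  have hQk : k * ((dpv + n1v) / k) = dpv + n1v := Nat.mul_div_cancel' hdvd
  have hQR : (k:ℝ) * (((dpv + n1v) / k : ℕ) : ℝ) = (dpv:ℝ) + n1v := by exact_mod_cast hQk
  have hD : (dpv : ℝ)/k = (((dpv + n1v) / k : ℕ) : ℝ) - n1v/k := by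
    field_simp
    try linarith
  have hO : (out : ℝ) = (((dpv + n1v) / k : ℕ) : ℝ) - lam := by
    have : (out : ℝ) + lam = (((dpv + n1v) / k : ℕ) : ℝ) := by exact_mod_cast h1
    linarith
  rw [hO, hD]
  have hN1 : (n1v : ℝ) < k := by exact_mod_cast hn1k
  rcases Nat.le_one_iff_eq_zero_or_eq_one.1 hlam1 with h | h <;> subst h
  · rw [show (((dpv + n1v) / k : ℕ) : ℝ) - (0:ℕ) - ((((dpv + n1v) / k : ℕ) : ℝ) - n1v/k)
      = n1v/k by push_cast; ring]
    rw [abs_of_nonneg (by positivity)]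
    exact (div_lt_one hkR).2 hN1
  · have hn1pos : (1:ℝ) ≤ n1v := by exact_mod_cast hlamn
    rw [show (((dpv + n1v) / k : ℕ) : ℝ) - (1:ℕ) - ((((dpv + n1v) / k : ℕ) : ℝ) - n1v/k)
      = n1v/k - 1 by push_cast; ring]
    rw [abs_of_nonpos (by rw [sub_nonpos]; exact (div_le_one hkR).2 (le_of_lt hN1))]
    have : 0 < (n1v:ℝ)/k := by positivity
    linarith

/-- Directed equitable factorization with, in addition, a parity condition at every
vertex `u` with `d⁺(u) ≡ d⁻(u) (mod k)`. -/
theorem directed_equitable_factorization_parity [Fintype V] [Fintype E] [DecidableEq V]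
    (ends : E → V × V) (k : ℕ) (hk : 0 < k) :
    ∃ c : E → Fin k,
      (∀ v : V, ∀ i : Fin k,
        (|((outdeg ends (univ.filter fun e => c e = i) v : ℝ)) -
            (outdeg ends univ v : ℝ) / (k : ℝ)| < 1) ∧
        (|((indeg ends (univ.filter fun e => c e = i) v : ℝ)) -
            (indeg ends univ v : ℝ) / (k : ℝ)| < 1)) ∧
      (∀ u : V, outdeg ends univ u ≡ indeg ends univ u [MOD k] →
        ∀ i : Fin k,
          ((outdeg ends (univ.filter fun e => c e = i) u +
              indeg ends (univ.filter fun e => c e = i) u : ℕ) : ℤ) ≡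
            ((outdeg ends univ u : ℤ) - (indeg ends univ u : ℤ)) / (k : ℤ) [ZMOD 2]) := by
  classical
  haveI : NeZero k := ⟨hk.ne'⟩
  letI : DecidableEq (AuxE ends k) := Classical.decEq _
  have hbal31 : ∀ v : V, outdeg ends univ v % k = indeg ends univ v % k →
      n3f ends k v = n1f ends k v := by
    intro v hb; unfold n3f n1f res; rw [hb]
  -- left divisibility
  have hdl : ∀ x, k ∣ #(univ.filter fun a : AuxE ends k => lmap ends k a = x) := by
    rintro (v | v | ⟨⟩)
    · rw [Lsize1]; exact res_dvd hk _
    · rw [Lsize2]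
      by_cases hb : outdeg ends univ v % k = indeg ends univ v % k
      · rw [if_pos hb, hbal31 v hb]
        have h4 : n4f ends k v = 0 := by unfold n4f; rw [if_pos hb]
        rw [h4]
        have hd := res_dvd hk (n1f ends k v)
        have e : n2f ends k v + (n1f ends k v + 0)
            = n1f ends k v + res k (n1f ends k v) := by
          have e2 : n2f ends k v = res k (n1f ends k v) := rfl
          omega
        rw [e]; exact hd
      · rw [if_neg hb]
        have h4 : n4f ends k v = res k (n3f ends k v) := by unfold n4f; rw [if_neg hb]
        rw [h4, zero_add]
        exact res_dvd hk _
    · rw [Lsize3]; exact res_dvd hk _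
  -- the ZMod congruence for the Z-sink
  have hz : ((∑ u : V, n4f ends k u : ℕ) : ZMod k) = ((zdf ends k : ℕ) : ZMod k) := by
    have e1 : ∀ u : V, ((n4f ends k u : ℕ) : ZMod k)
        = if outdeg ends univ u % k = indeg ends univ u % k then 0
          else ((indeg ends univ u : ℕ) : ZMod k) := by
      intro u; unfold n4f; split_ifs with hb
      · simp
      · unfold n3f; rw [res_cast hk, res_cast hk, neg_neg]
    have e2 : ∀ u : V, (((if outdeg ends univ u % k = indeg ends univ u % k then 0
        else n2f ends k u) : ℕ) : ZMod k)
        = if outdeg ends univ u % k = indeg ends univ u % k then 0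
          else ((outdeg ends univ u : ℕ) : ZMod k) := by
      intro u; split_ifs with hb
      · simp
      · unfold n2f n1f; rw [res_cast hk, res_cast hk, neg_neg]
    have o1 : ∑ u : V, outdeg ends univ u = Fintype.card E := by
      rw [← Finset.card_univ (α := E), Finset.card_eq_sum_card_fiberwise
        (f := fun e => (ends e).1) (t := univ) (fun e _ => mem_univ _)]
      rfl
    have o2 : ∑ u : V, indeg ends univ u = Fintype.card E := by
      rw [← Finset.card_univ (α := E), Finset.card_eq_sum_card_fiberwise
        (f := fun e => (ends e).2) (t := univ) (fun e _ => mem_univ _)]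
      rfl
    have e3 : ∑ u : V, ((outdeg ends univ u : ℕ) : ZMod k)
        = ∑ u : V, ((indeg ends univ u : ℕ) : ZMod k) := by
      have c1 : ((∑ u : V, outdeg ends univ u : ℕ) : ZMod k)
          = ∑ u : V, ((outdeg ends univ u : ℕ) : ZMod k) := by push_cast; rfl
      have c2 : ((∑ u : V, indeg ends univ u : ℕ) : ZMod k)
          = ∑ u : V, ((indeg ends univ u : ℕ) : ZMod k) := by push_cast; rfl
      rw [← c1, ← c2, o1, o2]
    have e4 : ∑ u : V, (if outdeg ends univ u % k = indeg ends univ u % k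
          then ((outdeg ends univ u : ℕ) : ZMod k) else 0)
        = ∑ u : V, (if outdeg ends univ u % k = indeg ends univ u % k
          then ((indeg ends univ u : ℕ) : ZMod k) else 0) := by
      refine Finset.sum_congr rfl fun u _ => ?_
      split_ifs with hb
      · rw [← ZMod.natCast_mod, hb, ZMod.natCast_mod]
      · rfl
    have split : ∀ (f : V → ZMod k), (∑ u : V, (if outdeg ends univ u % k
          = indeg ends univ u % k then 0 else f u))
        = (∑ u : V, f u) - ∑ u : V, (if outdeg ends univ u % k = indeg ends univ u % k
          then f u else 0) := by
      intro f
      rw [eq_sub_iff_add_eq, ← Finset.sum_add_distrib]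
      refine Finset.sum_congr rfl fun u _ => ?_
      split_ifs <;> ring
    have lhs : ((∑ u : V, n4f ends k u : ℕ) : ZMod k)
        = ∑ u : V, (if outdeg ends univ u % k = indeg ends univ u % k then 0
          else ((indeg ends univ u : ℕ) : ZMod k)) := by
      push_cast
      exact Finset.sum_congr rfl fun u _ => e1 u
    have rhs : ((zdf ends k : ℕ) : ZMod k)
        = ∑ u : V, (if outdeg ends univ u % k = indeg ends univ u % k then 0
          else ((outdeg ends univ u : ℕ) : ZMod k)) := by
      unfold zdf
      push_cast
      refine Finset.sum_congr rfl fun u _ => ?_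
      split_ifs with hb
      · simp
      · have h5 := e2 u
        rw [if_neg hb, if_neg hb] at h5
        exact h5
    rw [lhs, rhs, split, split, e3, e4]
  -- right divisibility
  have hdr : ∀ y, k ∣ #(univ.filter fun a : AuxE ends k => rmap ends k a = y) := by
    rintro (v | v | ⟨⟩)
    · rw [Rsize1]; exact res_dvd hk _
    · rw [Rsize2]
      have e2 : n2f ends k v = res k (n1f ends k v) := rfl
      rw [e2]
      exact res_dvd hk _
    · rw [Rsize3]
      have hzd : k ∣ zdf ends k + t0f ends k := res_dvd hk _
      have h0 : (((∑ u : V, n4f ends k u) + t0f ends k : ℕ) : ZMod k) = 0 := by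
        push_cast
        push_cast at hz
        rw [hz]
        have h1 := (ZMod.natCast_eq_zero_iff _ k).2 hzd
        push_cast at h1
        exact h1
      exact (ZMod.natCast_eq_zero_iff _ k).1 h0
  obtain ⟨c', hcl, hcr⟩ := exact_decomp (lmap ends k) (rmap ends k) k hk univ hdl hdr
  refine ⟨fun e => c' (Sum.inl e), fun v i => ?_, fun u hMOD i => ?_⟩
  · -- equitability
    have k1 := key1 ends k c' v i (hcl (Sum.inl v) i)
    have k2 := key2 ends k c' v i (hcr (Sum.inl v) i)
    have k3 := key3 ends k c' v i (hcr (Sum.inr (Sum.inl v)) i)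
    have k4 := key4 ends k c' v i (hcl (Sum.inr (Sum.inl v)) i)
    have hn1lt : n1f ends k v < k := res_lt hk _
    have hn3lt : n3f ends k v < k := res_lt hk _
    have e2 : n2f ends k v = res k (n1f ends k v) := rfl
    have epair := res_pair hk hn1lt
    have hle : n1f ends k v + n2f ends k v ≤ k := by
      rw [e2, epair]; split_ifs <;> omega
    have hdiv1 : (n1f ends k v + n2f ends k v) / k ≤ 1 := by
      calc (n1f ends k v + n2f ends k v) / k ≤ k / k := Nat.div_le_div_right hle
        _ = 1 := Nat.div_self hk
    have hlam1 : #(univ.filter fun j : Fin (n1f ends k v) =>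
        c' (Sum.inr (Sum.inl ⟨v, j⟩)) = i) ≤ 1 := by omega
    have hlamn : #(univ.filter fun j : Fin (n1f ends k v) =>
        c' (Sum.inr (Sum.inl ⟨v, j⟩)) = i) ≤ n1f ends k v :=
      le_trans (Finset.card_filter_le _ _) (by simp)
    have hRle : ((if outdeg ends univ v % k = indeg ends univ v % k
        then n2f ends k v else 0) + (n3f ends k v + n4f ends k v)) ≤ k := by
      by_cases hb : outdeg ends univ v % k = indeg ends univ v % k
      · rw [if_pos hb, hbal31 v hb]
        have h4 : n4f ends k v = 0 := by unfold n4f; rw [if_pos hb]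
        have epair2 := res_pair hk hn1lt
        split_ifs at epair2 <;> omega
      · rw [if_neg hb]
        have h4 : n4f ends k v = res k (n3f ends k v) := by unfold n4f; rw [if_neg hb]
        have epair2 := res_pair hk hn3lt
        split_ifs at epair2 <;> omega
    have hdiv4 : ((if outdeg ends univ v % k = indeg ends univ v % k
        then n2f ends k v else 0) + (n3f ends k v + n4f ends k v)) / k ≤ 1 := by
      calc _ ≤ k / k := Nat.div_le_div_right hRle
        _ = 1 := Nat.div_self hk
    have hmu1 : #(univ.filter fun j : Fin (n3f ends k v) =>
        c' (Sum.inr (Sum.inr (Sum.inr (Sum.inl ⟨v, j⟩)))) = i) ≤ 1 := by omega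
    have hmun : #(univ.filter fun j : Fin (n3f ends k v) =>
        c' (Sum.inr (Sum.inr (Sum.inr (Sum.inl ⟨v, j⟩)))) = i) ≤ n3f ends k v :=
      le_trans (Finset.card_filter_le _ _) (by simp)
    exact ⟨real_bound hk k1 (res_dvd hk _) hn1lt hlam1 hlamn,
      real_bound hk k2 (res_dvd hk _) hn3lt hmu1 hmun⟩
  · -- parity
    have hb : outdeg ends univ u % k = indeg ends univ u % k := hMOD
    have h31 := hbal31 u hb
    have h4 : n4f ends k u = 0 := by unfold n4f; rw [if_pos hb]
    have k1 := key1 ends k c' u i (hcl (Sum.inl u) i)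
    have k2 := key2 ends k c' u i (hcr (Sum.inl u) i)
    have hn1lt : n1f ends k u < k := res_lt hk _
    have hlam_eq_mu : #(univ.filter fun j : Fin (n1f ends k u) =>
        c' (Sum.inr (Sum.inl ⟨u, j⟩)) = i)
        = #(univ.filter fun j : Fin (n3f ends k u) =>
            c' (Sum.inr (Sum.inr (Sum.inr (Sum.inl ⟨u, j⟩)))) = i) := by
      have hlamn : #(univ.filter fun j : Fin (n1f ends k u) =>
          c' (Sum.inr (Sum.inl ⟨u, j⟩)) = i) ≤ n1f ends k u :=
        le_trans (Finset.card_filter_le _ _) (by simp)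
      have hmun : #(univ.filter fun j : Fin (n3f ends k u) =>
          c' (Sum.inr (Sum.inr (Sum.inr (Sum.inl ⟨u, j⟩)))) = i) ≤ n3f ends k u :=
        le_trans (Finset.card_filter_le _ _) (by simp)
      rcases Nat.eq_zero_or_pos (n1f ends k u) with h0 | hpos
      · omega
      · have k3 := key3 ends k c' u i (hcr (Sum.inr (Sum.inl u)) i)
        have k4 := key4 ends k c' u i (hcl (Sum.inr (Sum.inl u)) i)
        have e2 : n2f ends k u = res k (n1f ends k u) := rfl
        have epair := res_pair hk hn1lt
        have ek : n1f ends k u + n2f ends k u = k := by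
          split_ifs at epair <;> omega
        have eRHS : (if outdeg ends univ u % k = indeg ends univ u % k
            then n2f ends k u else 0) + (n3f ends k u + n4f ends k u) = k := by
          rw [if_pos hb, h31, h4]; omega
        have hkk : k / k = 1 := Nat.div_self hk
        rw [eRHS, hkk, if_pos hb] at k4
        have hka : #(univ.filter fun j : Fin (n4f ends k u) =>
            c' (Sum.inr (Sum.inr (Sum.inr (Sum.inr (Sum.inl ⟨u, j⟩))))) = i) = 0 := by
          have hle := Finset.card_filter_le (univ : Finset (Fin (n4f ends k u)))
            (fun j => c' (Sum.inr (Sum.inr (Sum.inr (Sum.inr (Sum.inl ⟨u, j⟩))))) = i)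
          rw [Finset.card_univ, Fintype.card_fin] at hle
          omega
        rw [ek, hkk] at k3
        omega
    -- final arithmetic
    have hdvd1 : k ∣ outdeg ends univ u + n1f ends k u := res_dvd hk _
    have hdvd2 : k ∣ indeg ends univ u + n3f ends k u := res_dvd hk _
    have hQp : (k:ℤ) * (((outdeg ends univ u + n1f ends k u) / k : ℕ) : ℤ)
        = (outdeg ends univ u : ℤ) + (n1f ends k u : ℤ) := by
      exact_mod_cast congrArg (Nat.cast : ℕ → ℤ) (Nat.mul_div_cancel' hdvd1)
    have hQm : (k:ℤ) * (((indeg ends univ u + n3f ends k u) / k : ℕ) : ℤ)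
        = (indeg ends univ u : ℤ) + (n3f ends k u : ℤ) := by
      exact_mod_cast congrArg (Nat.cast : ℕ → ℤ) (Nat.mul_div_cancel' hdvd2)
    have hsub : (outdeg ends univ u : ℤ) - (indeg ends univ u : ℤ)
        = (k:ℤ) * ((((outdeg ends univ u + n1f ends k u) / k : ℕ) : ℤ)
          - (((indeg ends univ u + n3f ends k u) / k : ℕ) : ℤ)) := by
      rw [mul_sub, hQp, hQm, h31]
      ring
    rw [hsub, Int.mul_ediv_cancel_left _ (by exact_mod_cast hk.ne' : (k:ℤ) ≠ 0)]
    have z1 : ((outdeg ends (univ.filter fun e => c' (Sum.inl e) = i) u : ℤ)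
        + (#(univ.filter fun j : Fin (n1f ends k u) => c' (Sum.inr (Sum.inl ⟨u, j⟩)) = i) : ℤ))
        = (((outdeg ends univ u + n1f ends k u) / k : ℕ) : ℤ) := by exact_mod_cast k1
    have z2 : ((indeg ends (univ.filter fun e => c' (Sum.inl e) = i) u : ℤ)
        + (#(univ.filter fun j : Fin (n3f ends k u) =>
            c' (Sum.inr (Sum.inr (Sum.inr (Sum.inl ⟨u, j⟩)))) = i) : ℤ))
        = (((indeg ends univ u + n3f ends k u) / k : ℕ) : ℤ) := by exact_mod_cast k2
    refine Int.modEq_iff_dvd.2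
      ⟨-(indeg ends (univ.filter fun e => c' (Sum.inl e) = i) u : ℤ), ?_⟩
    have z3 : (#(univ.filter fun j : Fin (n1f ends k u) =>
        c' (Sum.inr (Sum.inl ⟨u, j⟩)) = i) : ℤ)
        = (#(univ.filter fun j : Fin (n3f ends k u) =>
            c' (Sum.inr (Sum.inr (Sum.inr (Sum.inl ⟨u, j⟩)))) = i) : ℤ) := by
      exact_mod_cast hlam_eq_mu
    push_cast
    linarith
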